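/- Let A be an abelian group, X : ℕ → Set_* a tower of pointed sets, m ≥ 2 an integer, h ∈ lim_ℕ(X∧A) and x₁,…,x_l ∈ lim_ℕ X. Suppose that for every n ∈ ℕ and every a ∈ X(n) with h(n)_a ≠ 0 and a ∉ {x₁(n),…,x_l(n)}, the element h(n)_a is divisible by m in A. Then the class [h] of h in H(X,A) is divisible by m, i.e., there exists g ∈ lim_ℕ(X∧A) with h − m·g in the image of ρ. -/
import Mathlib


open CategoryTheory Finsupp

universe u v w

/-- The smash product `Y ∧ A` of a pointed set `(Y, y0)` with an abelian group `A`: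
the group of finitely supported functions `Y →₀ A` vanishing at the basepoint,
i.e. `⊕_{y ∈ Y∖{y0}} A`. -/
def Smash (Y : Type u) (y0 : Y) (A : Type v) [AddCommGroup A] :
    AddSubgroup (Y →₀ A) where
  carrier := {f | f y0 = 0}
  add_mem' := by
    intro a b ha hb
    simp only [Set.mem_setOf_eq, Finsupp.add_apply] at *
    rw [ha, hb, add_zero]
  zero_mem' := by simp
  neg_mem' := by
    intro a ha
    simp only [Set.mem_setOf_eq, Finsupp.neg_apply] at *
    rw [ha, neg_zero]

theorem mem_smash {Y : Type u} {y0 : Y} {A : Type v} [AddCommGroup A] {f : Y →₀ A} :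
    f ∈ Smash Y y0 A ↔ f y0 = 0 := Iff.rfl

/-- The pushforward homomorphism `g_* : Y∧A → Z∧A` induced by a (pointed) map
`g : Y → Z`: `(g_* f)(z) = ∑_{y : g y = z} f y` for `z ≠ z0`, and `(g_* f)(z0) = 0`. -/
noncomputable def smashMap {Y : Type u} {Z : Type v} (y0 : Y) (z0 : Z) (g : Y → Z)
    (A : Type w) [AddCommGroup A] :
    Smash Y y0 A →+ Smash Z z0 A where
  toFun f := ⟨(Finsupp.mapDomain g f.1).erase z0, Finsupp.erase_same⟩
  map_zero' := by
    apply Subtype.ext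
    simp
  map_add' f₁ f₂ := by
    apply Subtype.ext
    show (Finsupp.mapDomain g ((f₁ : Y →₀ A) + (f₂ : Y →₀ A))).erase z0 = _
    rw [Finsupp.mapDomain_add, Finsupp.erase_add]
    rfl

theorem smashMap_comp {Y : Type u} {Z : Type v} {W : Type w} (y0 : Y) (z0 : Z) (w0 : W)
    (g : Y → Z) (g' : Z → W) (hg' : g' z0 = w0)
    (A : Type*) [AddCommGroup A] (f : Smash Y y0 A) :
    smashMap z0 w0 g' A (smashMap y0 z0 g A f) = smashMap y0 w0 (g' ∘ g) A f := by
  classical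
  apply Subtype.ext
  show (Finsupp.mapDomain g' ((Finsupp.mapDomain g f.1).erase z0)).erase w0
      = (Finsupp.mapDomain (g' ∘ g) f.1).erase w0
  rw [Finsupp.mapDomain_comp]
  set h := Finsupp.mapDomain g f.1 with hh
  have key : Finsupp.mapDomain g' (h.erase z0)
      = Finsupp.mapDomain g' h - Finsupp.single w0 (h z0) := by
    have h1 : h.erase z0 = h - Finsupp.single z0 (h z0) := by
      ext a
      by_cases ha : a = z0
      · subst ha; simp
      · simp [Finsupp.erase_ne ha, Finsupp.single_apply, Ne.symm ha, ha]
    rw [h1]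
    have h2 := map_sub (Finsupp.mapDomain.addMonoidHom g') h (Finsupp.single z0 (h z0))
    simp only [Finsupp.mapDomain.addMonoidHom_apply] at h2
    rw [h2, Finsupp.mapDomain_single, hg']
  rw [key]
  ext a
  by_cases ha : a = w0
  · subst ha; simp
  · simp [Finsupp.erase_ne ha, Finsupp.single_apply, Ne.symm ha, ha]
/-- The inverse limit of a diagram of pointed sets, as a subset of the product. -/
def plim {D : Type u} [Category.{v} D] (F : D ⥤ Pointed.{w}) :
    Set (∀ d : D, (F.obj d).X) :=
  {x | ∀ ⦃d d' : D⦄ (u : d ⟶ d'), (F.map u).toFun (x d) = x d'}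

/-- The basepoint of the inverse limit of a diagram of pointed sets. -/
def plimPt {D : Type u} [Category.{v} D] (F : D ⥤ Pointed.{w}) : plim F :=
  ⟨fun d => (F.obj d).point, fun _ _ u => (F.map u).map_point⟩

/-- The inverse limit `lim_D (X ∧ A)` of the diagram of abelian groups obtained by
smashing a diagram of pointed sets with an abelian group `A`. -/
noncomputable def glim {D : Type u} [Category.{v} D] (F : D ⥤ Pointed.{w})
    (A : Type*) [AddCommGroup A] :
    AddSubgroup (∀ d : D, Smash (F.obj d).X (F.obj d).point A) where
  carrier := {h | ∀ ⦃d d' : D⦄ (u : d ⟶ d'),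
      smashMap (F.obj d).point (F.obj d').point (F.map u).toFun A (h d) = h d'}
  add_mem' := by
    intro a b ha hb d d' u
    rw [Pi.add_apply, map_add, ha u, hb u]
    rfl
  zero_mem' := by
    intro d d' u
    rw [Pi.zero_apply, map_zero]
    rfl
  neg_mem' := by
    intro a ha d d' u
    rw [Pi.neg_apply, map_neg, ha u]
    rfl

/-- The natural map `ρ : (lim_D X) ∧ A → lim_D (X ∧ A)`, whose component at `d`
is induced by the projection `lim_D X → X d`. -/
noncomputable def rho {D : Type u} [Category.{v} D] (F : D ⥤ Pointed.{w})
    (A : Type*) [AddCommGroup A] :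
    Smash (plim F) (plimPt F) A →+ glim F A where
  toFun f := ⟨fun d => smashMap (plimPt F) (F.obj d).point (fun x => x.1 d) A f, by
    intro d d' u
    rw [smashMap_comp (plimPt F) (F.obj d).point (F.obj d').point _ _ (F.map u).map_point A f]
    have : ((F.map u).toFun ∘ fun x : plim F => x.1 d) = fun x : plim F => x.1 d' := by
      funext x
      exact x.2 u
    rw [this]⟩
  map_zero' := by
    apply Subtype.ext
    funext d
    show smashMap (plimPt F) (F.obj d).point (fun x => x.1 d) A 0 = (0 : Smash _ _ A)
    exact map_zero _
  map_add' f₁ f₂ := by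
    apply Subtype.ext
    funext d
    show smashMap (plimPt F) (F.obj d).point (fun x => x.1 d) A (f₁ + f₂)
        = smashMap (plimPt F) (F.obj d).point (fun x => x.1 d) A f₁
          + smashMap (plimPt F) (F.obj d).point (fun x => x.1 d) A f₂
    exact map_add _ f₁ f₂

/-! ### Auxiliary lemmas -/

section AuxBasic
variable {Y : Type*} {Z : Type*} {A : Type*} [AddCommGroup A]

lemma erase_eq_self_of_apply_eq_zero (s : Z →₀ A) (z0 : Z) (h : s z0 = 0) :
    s.erase z0 = s := by
  classical
  ext a
  by_cases ha : a = z0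
  · subst ha; simp [h]
  · simp [Finsupp.erase_ne ha]

lemma mapDomain_apply'' [DecidableEq Z] (g : Y → Z) (v : Y →₀ A) (b : Z) :
    Finsupp.mapDomain g v b = ∑ y ∈ v.support, if g y = b then v y else 0 := by
  classical
  rw [Finsupp.mapDomain, Finsupp.sum_apply, Finsupp.sum]
  refine Finset.sum_congr rfl fun y _ => ?_
  rw [Finsupp.single_apply]

lemma smashMap_coe {y0 : Y} {z0 : Z} (g : Y → Z) (f : Smash Y y0 A) :
    ((smashMap y0 z0 g A f : Smash Z z0 A) : Z →₀ A)
      = (Finsupp.mapDomain g (f : Y →₀ A)).erase z0 := rfl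

lemma smashMap_apply [DecidableEq Z] {y0 : Y} {z0 : Z} (g : Y → Z) (f : Smash Y y0 A)
    (b : Z) (hb : b ≠ z0) :
    ((smashMap y0 z0 g A f : Smash Z z0 A) : Z →₀ A) b
      = ∑ y ∈ (f : Y →₀ A).support, if g y = b then (f : Y →₀ A) y else 0 := by
  rw [smashMap_coe, Finsupp.erase_ne hb, mapDomain_apply'']

lemma smashMap_id {y0 : Y} (f : Smash Y y0 A) :
    smashMap y0 y0 (fun a => a) A f = f := by
  apply Subtype.ext
  rw [smashMap_coe]
  rw [show Finsupp.mapDomain (fun a : Y => a) (f : Y →₀ A) = (f : Y →₀ A) from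
    Finsupp.mapDomain_id]
  exact erase_eq_self_of_apply_eq_zero _ _ f.2

/-- multiplication by `m` as an additive homomorphism. -/
def mMul (A : Type*) [AddCommGroup A] (m : ℕ) : A →+ A :=
  AddMonoidHom.mk' (fun a => m • a) fun a b => smul_add m a b

lemma mMul_apply {A : Type*} [AddCommGroup A] (m : ℕ) (a : A) : mMul A m a = m • a := rfl

lemma subgroup_coe_nsmul {G : Type*} [AddCommGroup G] (S : AddSubgroup G) (k : ℕ)
    (w : S) : ((k • w : S) : G) = k • (w : G) :=
  map_nsmul S.subtype k w

lemma finsupp_nsmul_apply {Z : Type*} (k : ℕ) (v : Z →₀ A) (b : Z) :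
    (k • v) b = k • (v b) :=
  map_nsmul (Finsupp.applyAddHom b) k v

/-- a pointwise division of an element of `Y ∧ A` all of whose values are
divisible by `m`, supported inside the support of the original element. -/
lemma exists_div {Y : Type*} {A : Type*} [AddCommGroup A] (y0 : Y) (m : ℕ)
    (v : Smash Y y0 A) (hv : ∀ b, (v : Y →₀ A) b ∈ (mMul A m).range) :
    ∃ w : Smash Y y0 A, m • w = v ∧
      ∀ b, (w : Y →₀ A) b ≠ 0 → (v : Y →₀ A) b ≠ 0 := by
  classical
  set q : Y → A := fun a =>
    if hq : (v : Y →₀ A) a = 0 then 0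
    else Classical.choose (AddMonoidHom.mem_range.mp (hv a)) with hqdef
  have hq0 : ∀ a, (v : Y →₀ A) a = 0 → q a = 0 := fun a ha => by simp [hqdef, ha]
  have hqm : ∀ a, m • q a = (v : Y →₀ A) a := by
    intro a
    by_cases ha : (v : Y →₀ A) a = 0
    · rw [hq0 a ha, smul_zero, ha]
    · have := Classical.choose_spec (AddMonoidHom.mem_range.mp (hv a))
      rw [hqdef]; simp only [ha, dif_neg, not_false_iff]
      exact this
  have hsupp : ∀ a, q a ≠ 0 → a ∈ (v : Y →₀ A).support := by
    intro a ha
    rw [Finsupp.mem_support_iff]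
    intro hva
    exact ha (hq0 a hva)
  refine ⟨⟨Finsupp.onFinset (v : Y →₀ A).support q hsupp, ?_⟩, ?_, ?_⟩
  · show q y0 = 0
    exact hq0 y0 v.2
  · apply Subtype.ext
    rw [subgroup_coe_nsmul]
    ext a
    rw [finsupp_nsmul_apply]
    show m • q a = (v : Y →₀ A) a
    exact hqm a
  · intro b hb
    have : q b ≠ 0 := hb
    intro hvb
    exact this (hq0 b hvb)

/-- pushforward preserves pointwise divisibility. -/
lemma div_push {Y Z : Type*} {A : Type*} [AddCommGroup A] (y0 : Y) (z0 : Z)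
    (g : Y → Z) (m : ℕ) (v : Smash Y y0 A)
    (hv : ∀ y, (v : Y →₀ A) y ∈ (mMul A m).range) :
    ∀ b, ((smashMap y0 z0 g A v : Smash Z z0 A) : Z →₀ A) b ∈ (mMul A m).range := by
  classical
  intro b
  by_cases hb : b = z0
  · have h0 : ((smashMap y0 z0 g A v : Smash Z z0 A) : Z →₀ A) b = 0 := by
      rw [hb]; exact (smashMap y0 z0 g A v).2
    rw [h0]
    exact zero_mem _
  · rw [smashMap_apply g v b hb]
    refine AddSubgroup.sum_mem _ fun y _ => ?_
    by_cases hgy : g y = b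
    · rw [if_pos hgy]; exact hv y
    · rw [if_neg hgy]; exact zero_mem _

/-- dependent recursive choice along `ℕ`. -/
lemma dep_choice {α : ℕ → Sort*} (Q : ∀ n, α n → Prop) (R : ∀ n, α (n + 1) → α n → Prop)
    (h0 : ∃ a, Q 0 a) (hs : ∀ n a, Q n a → ∃ b, Q (n + 1) b ∧ R n b a) :
    ∃ f : ∀ n, α n, (∀ n, Q n (f n)) ∧ ∀ n, R n (f (n + 1)) (f n) := by
  let g : ∀ n, {a : α n // Q n a} := fun n =>
    Nat.rec ⟨Classical.choose h0, Classical.choose_spec h0⟩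
      (fun k p => ⟨Classical.choose (hs k p.1 p.2),
        (Classical.choose_spec (hs k p.1 p.2)).1⟩) n
  exact ⟨fun n => (g n).1, fun n => (g n).2,
    fun n => (Classical.choose_spec (hs n (g n).1 (g n).2)).2⟩

end AuxBasic

section AuxTower

variable (F : ℕᵒᵖ ⥤ Pointed.{w})

/-- the underlying set at stage `n` of the tower. -/
abbrev XX (n : ℕ) : Type w := (F.obj (Opposite.op n)).X

/-- the basepoint at stage `n` of the tower. -/
abbrev ppt (n : ℕ) : XX F n := (F.obj (Opposite.op n)).point

/-- the transition map from stage `N` down to stage `n`. -/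
abbrev tmap {n N : ℕ} (hnN : n ≤ N) : XX F N → XX F n :=
  (F.map (homOfLE hnN).op).toFun

lemma tmap_point {n N : ℕ} (hnN : n ≤ N) : tmap F hnN (ppt F N) = ppt F n :=
  (F.map (homOfLE hnN).op).map_point

lemma tmap_refl {n : ℕ} (hnn : n ≤ n) (c : XX F n) : tmap F hnn c = c := by
  have h1 : (homOfLE hnn : n ⟶ n) = 𝟙 n := Subsingleton.elim _ _
  show (F.map (homOfLE hnn).op).toFun c = c
  rw [h1, op_id, F.map_id]
  rfl

lemma tmap_comp {n k N : ℕ} (h1 : n ≤ k) (h2 : k ≤ N) (c : XX F N) :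
    tmap F h1 (tmap F h2 c) = tmap F (h1.trans h2) c := by
  have he : (homOfLE (h1.trans h2) : n ⟶ N) = homOfLE h1 ≫ homOfLE h2 :=
    Subsingleton.elim _ _
  show _ = (F.map (homOfLE (h1.trans h2)).op).toFun c
  rw [he, op_comp, F.map_comp]
  rfl

lemma plim_down (x : ↥(plim F)) {n N : ℕ} (hnN : n ≤ N) :
    tmap F hnN (x.1 (Opposite.op N)) = x.1 (Opposite.op n) :=
  x.2 ((homOfLE hnN).op)

lemma plimPt_apply (n : ℕ) : (plimPt F).1 (Opposite.op n) = ppt F n := rfl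

variable (A : Type*) [AddCommGroup A]

lemma glim_down (w : ↥(glim F A)) {n N : ℕ} (hnN : n ≤ N) :
    smashMap (ppt F N) (ppt F n) (tmap F hnN) A (w.1 (Opposite.op N))
      = w.1 (Opposite.op n) :=
  w.2 ((homOfLE hnN).op)

/-- a family compatible along successive stages is in `glim`. -/
lemma mem_glim_of_step (e : ∀ n : ℕ, Smash (XX F n) (ppt F n) A)
    (he : ∀ n, smashMap (ppt F (n + 1)) (ppt F n) (tmap F (Nat.le_succ n)) A (e (n + 1))
      = e n) :
    (fun d : ℕᵒᵖ => e d.unop) ∈ glim F A := by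
  have aux : ∀ (k n' : ℕ) (hle : n' ≤ n' + k),
      smashMap (ppt F (n' + k)) (ppt F n') (tmap F hle) A (e (n' + k)) = e n' := by
    intro k
    induction k with
    | zero =>
      intro n' hle
      have h1 : tmap F hle = fun c => c := funext fun c => tmap_refl F hle c
      rw [h1]
      exact smashMap_id _
    | succ k ih =>
      intro n' hle
      have h1 : n' ≤ n' + k := Nat.le_add_right _ _
      have h2 : tmap F hle = tmap F h1 ∘ tmap F (Nat.le_succ (n' + k)) := by
        funext c
        exact (tmap_comp F h1 (Nat.le_succ (n' + k)) c).symm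
      have h3 : (smashMap (ppt F (n' + (k + 1))) (ppt F (n' + k))
          (tmap F (Nat.le_succ (n' + k))) A) (e (n' + (k + 1))) = e (n' + k) := he (n' + k)
      rw [h2, ← smashMap_comp _ _ _ _ _ (tmap_point F h1) A, h3]
      exact ih n' h1
  intro d d' u
  obtain ⟨n, rfl⟩ : ∃ n, d = Opposite.op n := ⟨d.unop, rfl⟩
  obtain ⟨n', rfl⟩ : ∃ n', d' = Opposite.op n' := ⟨d'.unop, rfl⟩
  have hle : n' ≤ n := leOfHom u.unop
  have hu : u = (homOfLE hle).op := Quiver.Hom.unop_inj (Subsingleton.elim _ _)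
  rw [hu]
  obtain ⟨k, rfl⟩ := Nat.exists_eq_add_of_le hle
  exact aux k n' hle

set_option maxHeartbeats 1000000

/-- a coordinatewise `m`-divisible element of `glim` is divisible by `m`. -/
lemma exists_glim_div (m : ℕ) (dd : ↥(glim F A))
    (hddM : ∀ (n : ℕ) (b : XX F n),
      (dd.1 (Opposite.op n)).1 b ∈ (mMul A m).range) :
    ∃ gg : ↥(glim F A), m • gg = dd := by
  classical
  -- the saturation of the supports of dd
  set U : ∀ n : ℕ, Set (XX F n) := fun n =>
    {a | ∃ N, ∃ hle : n ≤ N, ∃ c, (dd.1 (Opposite.op N)).1 c ≠ 0 ∧ tmap F hle c = a}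
    with hU
  have U1 : ∀ n c, (dd.1 (Opposite.op n)).1 c ≠ 0 → c ∈ U n := by
    intro n c hc
    exact ⟨n, le_rfl, c, hc, tmap_refl F le_rfl c⟩
  have U2 : ∀ n a, a ∈ U n → ∃ b, b ∈ U (n + 1) ∧ tmap F (Nat.le_succ n) b = a := by
    intro n a ha
    obtain ⟨N, hle, c, hc, hEq⟩ := ha
    by_cases hN : n + 1 ≤ N
    · refine ⟨tmap F hN c, ⟨N, hN, c, hc, rfl⟩, ?_⟩
      rw [tmap_comp F (Nat.le_succ n) hN c]
      exact hEq
    · have hNn : n = N := le_antisymm hle (by omega)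
      subst hNn
      rw [tmap_refl F hle c] at hEq
      subst hEq
      have hapt : c ≠ ppt F n := by
        intro e
        apply hc
        rw [e]
        exact (dd.1 (Opposite.op n)).2
      have hval : (dd.1 (Opposite.op n)).1 c
          = ∑ y ∈ (dd.1 (Opposite.op (n + 1))).1.support,
              if tmap F (Nat.le_succ n) y = c then (dd.1 (Opposite.op (n + 1))).1 y else 0 := by
        rw [← glim_down F A dd (Nat.le_succ n)]
        exact smashMap_apply _ _ c hapt
      rw [hval] at hc
      obtain ⟨y, hy, hyne⟩ := Finset.exists_ne_zero_of_sum_ne_zero hc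
      by_cases hcond : tmap F (Nat.le_succ n) y = c
      · exact ⟨y, U1 (n + 1) y (Finsupp.mem_support_iff.mp hy), hcond⟩
      · exfalso; rw [if_neg hcond] at hyne; exact hyne rfl
  -- the coherent division of dd
  have base : ∃ w : ↥(Smash (XX F 0) (ppt F 0) A),
      m • w = dd.1 (Opposite.op 0) ∧ ∀ b, (w : XX F 0 →₀ A) b ≠ 0 → b ∈ U 0 := by
    obtain ⟨w, hw1, hw2⟩ := exists_div (ppt F 0) m (dd.1 (Opposite.op 0)) (hddM 0)
    exact ⟨w, hw1, fun b hb => U1 0 b (hw2 b hb)⟩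
  have step : ∀ (n : ℕ) (w : ↥(Smash (XX F n) (ppt F n) A)),
      (m • w = dd.1 (Opposite.op n) ∧ ∀ b, (w : XX F n →₀ A) b ≠ 0 → b ∈ U n) →
      ∃ w' : ↥(Smash (XX F (n + 1)) (ppt F (n + 1)) A),
        (m • w' = dd.1 (Opposite.op (n + 1)) ∧
          ∀ b, (w' : XX F (n + 1) →₀ A) b ≠ 0 → b ∈ U (n + 1)) ∧
        smashMap (ppt F (n + 1)) (ppt F n) (tmap F (Nat.le_succ n)) A w' = w := by
    intro n w hw
    obtain ⟨hwm, hwU⟩ := hw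
    obtain ⟨eps, heps1, heps2⟩ :=
      exists_div (ppt F (n + 1)) m (dd.1 (Opposite.op (n + 1))) (hddM (n + 1))
    set sm := smashMap (ppt F (n + 1)) (ppt F n) (tmap F (Nat.le_succ n)) A with hsm
    set tau : ↥(Smash (XX F n) (ppt F n) A) := w - sm eps with htau
    have htaum : m • tau = 0 := by
      have hcalc : m • tau = m • w - m • sm eps := by
        rw [htau]
        exact map_sub (mMul _ m) w (sm eps)
      rw [hcalc, hwm, ← map_nsmul sm m eps, heps1, glim_down F A dd (Nat.le_succ n),
        sub_self]
    have htauz : ∀ b, m • ((tau : XX F n →₀ A) b) = 0 := by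
      intro b
      have h1 : ((m • tau : ↥(Smash (XX F n) (ppt F n) A)) : XX F n →₀ A) = 0 := by
        rw [htaum]; rfl
      rw [subgroup_coe_nsmul] at h1
      calc m • ((tau : XX F n →₀ A) b) = (m • (tau : XX F n →₀ A)) b :=
            (finsupp_nsmul_apply m _ b).symm
        _ = 0 := by rw [h1]; rfl
    have htauU : ∀ b, (tau : XX F n →₀ A) b ≠ 0 → b ∈ U n := by
      intro b hb
      have htval : (tau : XX F n →₀ A) b
          = (w : XX F n →₀ A) b - ((sm eps : ↥(Smash (XX F n) (ppt F n) A)) : XX F n →₀ A) b := by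
        rw [htau]; rfl
      by_cases h1 : (w : XX F n →₀ A) b ≠ 0
      · exact hwU b h1
      · push_neg at h1
        have h2 : ((sm eps : ↥(Smash (XX F n) (ppt F n) A)) : XX F n →₀ A) b ≠ 0 := by
          intro h2
          apply hb
          rw [htval, h1, h2, sub_zero]
        have hbpt : b ≠ ppt F n := by
          intro e
          apply h2
          rw [e]
          exact (sm eps).2
        rw [hsm, smashMap_apply _ _ b hbpt] at h2
        obtain ⟨y, hy, hyne⟩ := Finset.exists_ne_zero_of_sum_ne_zero h2
        by_cases hcond : tmap F (Nat.le_succ n) y = b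
        · exact ⟨n + 1, Nat.le_succ n, y,
            heps2 y (Finsupp.mem_support_iff.mp hy), hcond⟩
        · exfalso; rw [if_neg hcond] at hyne; exact hyne rfl
    set psi : XX F n → XX F (n + 1) := fun b =>
      if hb : b ∈ U n then Classical.choose (U2 n b hb) else ppt F (n + 1) with hpsi
    have hpsi1 : ∀ b (hb : b ∈ U n), psi b ∈ U (n + 1) := by
      intro b hb
      rw [hpsi]
      simp only [dif_pos hb]
      exact (Classical.choose_spec (U2 n b hb)).1
    have hpsi2 : ∀ b (hb : b ∈ U n), tmap F (Nat.le_succ n) (psi b) = b := by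
      intro b hb
      rw [hpsi]
      simp only [dif_pos hb]
      exact (Classical.choose_spec (U2 n b hb)).2
    set beta0 : XX F (n + 1) →₀ A := Finsupp.mapDomain psi (tau : XX F n →₀ A) with hbeta0
    have htsuppU : ∀ b ∈ (tau : XX F n →₀ A).support, b ∈ U n :=
      fun b hb => htauU b (Finsupp.mem_support_iff.mp hb)
    have hbpt : beta0 (ppt F (n + 1)) = 0 := by
      rw [hbeta0, mapDomain_apply'']
      refine Finset.sum_eq_zero fun y hy => ?_
      have hyU := htsuppU y hy
      have hne : psi y ≠ ppt F (n + 1) := by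
        intro e
        have h3 := hpsi2 y hyU
        rw [e, tmap_point] at h3
        have h4 := Finsupp.mem_support_iff.mp hy
        apply h4
        rw [← h3]
        exact tau.2
      rw [if_neg hne]
    set beta : ↥(Smash (XX F (n + 1)) (ppt F (n + 1)) A) := ⟨beta0, hbpt⟩ with hbeta
    have hbetam : m • beta = 0 := by
      apply Subtype.ext
      rw [subgroup_coe_nsmul]
      show m • beta0 = ((0 : ↥(Smash (XX F (n + 1)) (ppt F (n + 1)) A)) : _ →₀ A)
      have hz : m • beta0 = (0 : XX F (n + 1) →₀ A) := by
        ext a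
        rw [finsupp_nsmul_apply]
        have hval : beta0 a
            = ∑ y ∈ (tau : XX F n →₀ A).support, if psi y = a then (tau : XX F n →₀ A) y else 0 := by
          rw [hbeta0, mapDomain_apply'']
        rw [hval]
        have hmm : m • (∑ y ∈ (tau : XX F n →₀ A).support,
              if psi y = a then (tau : XX F n →₀ A) y else 0)
            = ∑ y ∈ (tau : XX F n →₀ A).support,
              mMul A m (if psi y = a then (tau : XX F n →₀ A) y else 0) :=
          map_sum (mMul A m) _ _
        rw [hmm]
        rw [Finsupp.coe_zero, Pi.zero_apply]
        refine Finset.sum_eq_zero fun y hy => ?_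
        by_cases hc : psi y = a
        · rw [if_pos hc, mMul_apply]
          exact htauz y
        · rw [if_neg hc, map_zero]
      rw [hz]
      rfl
    have hbetaU : ∀ b, (beta : XX F (n + 1) →₀ A) b ≠ 0 → b ∈ U (n + 1) := by
      intro b hb
      have hmem : b ∈ (Finsupp.mapDomain psi (tau : XX F n →₀ A)).support :=
        Finsupp.mem_support_iff.mpr hb
      have hsub := Finsupp.mapDomain_support (f := psi) (s := (tau : XX F n →₀ A))
      obtain ⟨b0, hb0, hb0e⟩ := Finset.mem_image.mp (hsub hmem)
      rw [← hb0e]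
      exact hpsi1 b0 (htsuppU b0 hb0)
    have hbetapush : sm beta = tau := by
      apply Subtype.ext
      rw [hsm, smashMap_coe]
      show (Finsupp.mapDomain (tmap F (Nat.le_succ n)) beta0).erase (ppt F n)
          = (tau : XX F n →₀ A)
      rw [hbeta0, ← Finsupp.mapDomain_comp]
      have hagree : ∀ b ∈ (tau : XX F n →₀ A).support,
          (tmap F (Nat.le_succ n) ∘ psi) b = id b :=
        fun b hb => hpsi2 b (htsuppU b hb)
      rw [Finsupp.mapDomain_congr hagree, Finsupp.mapDomain_id]
      exact erase_eq_self_of_apply_eq_zero _ _ tau.2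
    refine ⟨eps + beta, ⟨?_, ?_⟩, ?_⟩
    · rw [smul_add, heps1, hbetam, add_zero]
    · intro b hb
      have hval : ((eps + beta : ↥(Smash (XX F (n + 1)) (ppt F (n + 1)) A)) : XX F (n + 1) →₀ A) b
          = (eps : XX F (n + 1) →₀ A) b + (beta : XX F (n + 1) →₀ A) b := rfl
      rw [hval] at hb
      by_cases h1 : (eps : XX F (n + 1) →₀ A) b ≠ 0
      · exact U1 (n + 1) b (heps2 b h1)
      · push_neg at h1
        have h2 : (beta : XX F (n + 1) →₀ A) b ≠ 0 := by
          intro h2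
          apply hb
          rw [h1, h2, add_zero]
        exact hbetaU b h2
    · rw [map_add, hbetapush, htau]
      abel
  obtain ⟨e, he1, he2⟩ := dep_choice
    (fun n (wn : ↥(Smash (XX F n) (ppt F n) A)) =>
      m • wn = dd.1 (Opposite.op n) ∧ ∀ b, (wn : XX F n →₀ A) b ≠ 0 → b ∈ U n)
    (fun n w' wn =>
      smashMap (ppt F (n + 1)) (ppt F n) (tmap F (Nat.le_succ n)) A w' = wn)
    base step
  refine ⟨⟨fun d => e d.unop, mem_glim_of_step F A e he2⟩, ?_⟩
  apply Subtype.ext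
  funext d
  set gg : ↥(glim F A) := ⟨fun d => e d.unop, mem_glim_of_step F A e he2⟩ with hgg
  have h1 : ((m • gg : ↥(glim F A)) : ∀ d : ℕᵒᵖ,
      ↥(Smash (F.obj d).X (F.obj d).point A)) d = m • (gg.1 d) := by
    rw [subgroup_coe_nsmul]
    rfl
  rw [h1]
  show m • e d.unop = dd.1 d
  rw [(he1 d.unop).1]

end AuxTower

/-- Let `A` be an abelian group, `F : ℕᵒᵖ ⥤ Set_*` a tower of pointed sets, `m ≥ 2`,
`h ∈ lim_ℕ(X∧A)` and `x₁, …, x_l ∈ lim_ℕ X`.  Suppose that for every `n ∈ ℕ` and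
every `a ∈ X(n)` with `h(n)_a ≠ 0` and `a ∉ {x₁(n), …, x_l(n)}`, the element
`h(n)_a` is divisible by `m` in `A`.  Then the class `[h]` in `H(X,A)` is divisible
by `m`: there is `g ∈ lim_ℕ(X∧A)` with `h - m • g` in the image of `ρ`. -/
theorem stmt15 (F : ℕᵒᵖ ⥤ Pointed.{w}) {A : Type*} [AddCommGroup A]
    (m : ℕ) (hm : 2 ≤ m) (h : glim F A) (l : ℕ) (x : Fin l → plim F)
    (hdiv : ∀ (n : ℕ) (a : (F.obj (Opposite.op n)).X),
      (h.1 (Opposite.op n)).1 a ≠ 0 → (∀ i : Fin l, a ≠ (x i).1 (Opposite.op n)) →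
        ∃ b : A, (h.1 (Opposite.op n)).1 a = m • b) :
    ∃ g : glim F A, (h : ↥(glim F A)) - m • g ∈ (rho F A).range := by
  classical
  -- eventual separation of limit points
  have exdiff : ∀ y z : ↥(plim F), y ≠ z →
      ∃ n : ℕ, y.1 (Opposite.op n) ≠ z.1 (Opposite.op n) := by
    intro y z hyz
    by_contra hno
    push_neg at hno
    apply hyz
    apply Subtype.ext
    funext d
    have hd := hno d.unop
    rwa [Opposite.op_unop] at hd
  set npair : Fin l → Fin l → ℕ := fun i j =>
    if hne : x i = x j then 0 else Classical.choose (exdiff _ _ hne) with hnpair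
  set npt : Fin l → ℕ := fun i =>
    if hne : x i = plimPt F then 0 else Classical.choose (exdiff _ _ hne) with hnpt
  set N0 : ℕ := (Finset.univ.sup fun p : Fin l × Fin l => npair p.1 p.2)
      + Finset.univ.sup npt with hN0
  have SEP : ∀ K, N0 ≤ K → ∀ i j,
      (x i).1 (Opposite.op K) = (x j).1 (Opposite.op K) → x i = x j := by
    intro K hK i j hEq
    by_contra hne
    have hle : npair i j ≤ K :=
      le_trans (le_trans (Finset.le_sup (f := fun p : Fin l × Fin l => npair p.1 p.2)
        (Finset.mem_univ (i, j))) (Nat.le_add_right _ _)) hK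
    have hch := Classical.choose_spec (exdiff (x i) (x j) hne)
    have hdef : npair i j = Classical.choose (exdiff (x i) (x j) hne) := by
      rw [hnpair]; exact dif_neg hne
    rw [hdef] at hle
    apply hch
    rw [← plim_down F (x i) hle, ← plim_down F (x j) hle, hEq]
  have SEPpt : ∀ K, N0 ≤ K → ∀ i,
      (x i).1 (Opposite.op K) = ppt F K → x i = plimPt F := by
    intro K hK i hEq
    by_contra hne
    have hle : npt i ≤ K :=
      le_trans (le_trans (Finset.le_sup (f := npt) (Finset.mem_univ i))
        (Nat.le_add_left _ _)) hK
    have hch := Classical.choose_spec (exdiff (x i) (plimPt F) hne)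
    have hdef : npt i = Classical.choose (exdiff (x i) (plimPt F) hne) := by
      rw [hnpt]; exact dif_neg hne
    rw [hdef] at hle
    apply hch
    rw [← plim_down F (x i) hle, ← plim_down F (plimPt F) hle, hEq]
    rfl
  -- the correction element f of (lim X) ∧ A
  set S : Finset ↥(plim F) := Finset.univ.image x with hS
  set hv : ↥(plim F) → A :=
    fun a => (h.1 (Opposite.op N0)).1 (a.1 (Opposite.op N0)) with hhv
  set wf : ↥(plim F) → A :=
    fun a => if a = plimPt F then 0 else if a ∈ S then hv a else 0 with hwf
  have hwfS : ∀ a, wf a ≠ 0 → a ∈ S := by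
    intro a ha
    rw [hwf] at ha
    by_cases h1 : a = plimPt F
    · simp [h1] at ha
    · by_cases h2 : a ∈ S
      · exact h2
      · simp [h1, h2] at ha
  set f0 : ↥(plim F) →₀ A := Finsupp.onFinset S wf hwfS with hf0
  have hf0apply : ∀ a, f0 a = wf a := fun a => rfl
  have hf0pt : f0 (plimPt F) = 0 := by rw [hf0apply, hwf]; simp
  set f : ↥(Smash ↥(plim F) (plimPt F) A) := ⟨f0, hf0pt⟩ with hfdef
  set dd : ↥(glim F A) := h - rho F A f with hdd_def
  -- coordinates of dd
  have ddval : ∀ (d : ℕᵒᵖ) (b : (F.obj d).X),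
      (dd.1 d).1 b = (h.1 d).1 b - ((rho F A f).1 d).1 b := by
    intro d b
    rw [hdd_def]
    rfl
  have rhoval : ∀ (n : ℕ) (b : XX F n), b ≠ ppt F n →
      ((rho F A f).1 (Opposite.op n)).1 b
        = ∑ a ∈ f0.support, if a.1 (Opposite.op n) = b then f0 a else 0 := by
    intro n b hb
    exact smashMap_apply _ f b hb
  have hstep : ∀ (K : ℕ) (b : XX F K), b ≠ ppt F K →
      (h.1 (Opposite.op K)).1 b
        = ∑ y ∈ (h.1 (Opposite.op (K + 1))).1.support,
            if tmap F (Nat.le_succ K) y = b then (h.1 (Opposite.op (K + 1))).1 y else 0 := by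
    intro K b hb
    rw [← glim_down F A h (Nat.le_succ K)]
    exact smashMap_apply _ _ b hb
  -- the one-step increments along a branch are divisible
  have INC : ∀ K, N0 ≤ K → ∀ i, x i ≠ plimPt F →
      (h.1 (Opposite.op (K + 1))).1 ((x i).1 (Opposite.op (K + 1)))
        - (h.1 (Opposite.op K)).1 ((x i).1 (Opposite.op K)) ∈ (mMul A m).range := by
    intro K hK i hxi
    have hbpt : (x i).1 (Opposite.op K) ≠ ppt F K := fun c => hxi (SEPpt K hK i c)
    have hKval := hstep K _ hbpt
    set v := (h.1 (Opposite.op (K + 1))).1 with hvv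
    set a' := (x i).1 (Opposite.op (K + 1)) with ha'
    have htm : tmap F (Nat.le_succ K) a' = (x i).1 (Opposite.op K) :=
      plim_down F (x i) (Nat.le_succ K)
    have hsplit : (∑ y ∈ v.support,
          if tmap F (Nat.le_succ K) y = (x i).1 (Opposite.op K) then v y else 0)
        = v a' + ∑ y ∈ v.support.erase a',
            (if tmap F (Nat.le_succ K) y = (x i).1 (Opposite.op K) then v y else 0) := by
      by_cases hmem : a' ∈ v.support
      · rw [← Finset.add_sum_erase _ _ hmem, if_pos htm]
      · rw [Finset.erase_eq_of_notMem hmem, Finsupp.notMem_support_iff.mp hmem,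
          zero_add]
    have hrest : (∑ y ∈ v.support.erase a',
        (if tmap F (Nat.le_succ K) y = (x i).1 (Opposite.op K) then v y else 0))
          ∈ (mMul A m).range := by
      refine AddSubgroup.sum_mem _ fun y hy => ?_
      by_cases hcond : tmap F (Nat.le_succ K) y = (x i).1 (Opposite.op K)
      · rw [if_pos hcond]
        have hy1 : y ≠ a' := Finset.ne_of_mem_erase hy
        have hy2 : v y ≠ 0 := Finsupp.mem_support_iff.mp (Finset.mem_of_mem_erase hy)
        have hyx : ∀ j, y ≠ (x j).1 (Opposite.op (K + 1)) := by
          intro j hyj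
          have hxx : (x j).1 (Opposite.op K) = (x i).1 (Opposite.op K) := by
            rw [← plim_down F (x j) (Nat.le_succ K), ← hyj, hcond]
          have hji := SEP K hK j i hxx
          apply hy1
          rw [hyj, hji, ha']
        obtain ⟨q, hq⟩ := hdiv (K + 1) y hy2 hyx
        exact AddMonoidHom.mem_range.mpr ⟨q, hq.symm⟩
      · rw [if_neg hcond]; exact zero_mem _
    rw [hKval, hsplit, sub_add_cancel_left]
    exact neg_mem hrest
  have TEL : ∀ (kk : ℕ) (i : Fin l), x i ≠ plimPt F →
      (h.1 (Opposite.op (N0 + kk))).1 ((x i).1 (Opposite.op (N0 + kk))) - hv (x i)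
        ∈ (mMul A m).range := by
    intro kk
    induction kk with
    | zero =>
      intro i hxi
      have hz : hv (x i)
          = (h.1 (Opposite.op (N0 + 0))).1 ((x i).1 (Opposite.op (N0 + 0))) := rfl
      rw [hz, sub_self]
      exact zero_mem _
    | succ k ih =>
      intro i hxi
      have e1 := INC (N0 + k) (Nat.le_add_right _ _) i hxi
      have e2 := ih i hxi
      have e3 := add_mem e1 e2
      rwa [sub_add_sub_cancel] at e3
  -- coordinatewise divisibility of dd at high levels
  have hdd_ge : ∀ n, N0 ≤ n → ∀ b : XX F n,
      (dd.1 (Opposite.op n)).1 b ∈ (mMul A m).range := by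
    intro n hn b
    by_cases hbp : b = ppt F n
    · have h0 : (dd.1 (Opposite.op n)).1 b = 0 := by
        rw [hbp]; exact (dd.1 (Opposite.op n)).2
      rw [h0]; exact zero_mem _
    · rw [ddval, rhoval n b hbp]
      by_cases hex : ∃ i, (x i).1 (Opposite.op n) = b
      · obtain ⟨i, hi⟩ := hex
        have hxi : x i ≠ plimPt F := by
          intro e
          apply hbp
          rw [← hi, e]
          rfl
        have hsum : (∑ a ∈ f0.support, if a.1 (Opposite.op n) = b then f0 a else 0)
            = hv (x i) := by
          rw [Finset.sum_eq_single (x i)]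
          · rw [if_pos hi, hf0apply, hwf]
            have hxS : x i ∈ S := by
              rw [hS]; exact Finset.mem_image_of_mem x (Finset.mem_univ i)
            simp [hxi, hxS]
          · intro a ha hne
            by_cases hc : a.1 (Opposite.op n) = b
            · exfalso
              have haS : a ∈ S := hwfS a (by
                have hfa : f0 a ≠ 0 := Finsupp.mem_support_iff.mp ha
                rwa [hf0apply] at hfa)
              rw [hS] at haS
              obtain ⟨j, _, hj⟩ := Finset.mem_image.mp haS
              have hxx : (x j).1 (Opposite.op n) = (x i).1 (Opposite.op n) := by
                rw [hj, hc]; exact hi.symm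
              have hji := SEP n hn j i hxx
              apply hne
              rw [← hj, hji]
            · rw [if_neg hc]
          · intro hni
            rw [if_pos hi]
            exact Finsupp.notMem_support_iff.mp hni
        rw [hsum]
        obtain ⟨k, hk⟩ := Nat.exists_eq_add_of_le hn
        subst hk
        have hT := TEL k i hxi
        rwa [hi] at hT
      · push_neg at hex
        have hz : (∑ a ∈ f0.support, if a.1 (Opposite.op n) = b then f0 a else 0) = 0 := by
          refine Finset.sum_eq_zero fun a ha => ?_
          have haS : a ∈ S := hwfS a (by
            have hfa : f0 a ≠ 0 := Finsupp.mem_support_iff.mp ha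
            rwa [hf0apply] at hfa)
          rw [hS] at haS
          obtain ⟨j, _, hj⟩ := Finset.mem_image.mp haS
          have hc : a.1 (Opposite.op n) ≠ b := by
            rw [← hj]; exact hex j
          rw [if_neg hc]
        rw [hz, sub_zero]
        by_cases h0 : (h.1 (Opposite.op n)).1 b = 0
        · rw [h0]; exact zero_mem _
        · obtain ⟨q, hq⟩ := hdiv n b h0 (fun i => Ne.symm (hex i))
          exact AddMonoidHom.mem_range.mpr ⟨q, hq.symm⟩
  have hddM : ∀ (n : ℕ) (b : XX F n),
      (dd.1 (Opposite.op n)).1 b ∈ (mMul A m).range := by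
    intro n b
    by_cases hn : N0 ≤ n
    · exact hdd_ge n hn b
    · have hn' : n ≤ N0 := le_of_not_ge hn
      rw [← glim_down F A dd hn']
      exact div_push _ _ _ m _ (hdd_ge N0 le_rfl) b
  obtain ⟨gg, hmgg⟩ := exists_glim_div F A m dd hddM
  refine ⟨gg, AddMonoidHom.mem_range.mpr ⟨f, ?_⟩⟩
  rw [hmgg, hdd_def]
  abel
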